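/- Nochka's theorem: Let r, n, q be natural numbers with 1 ≤ r ≤ n and 2n − r + 1 ≤ q. Let L₁, …, L_q be nonzero linear forms on ℂ^{r+1} that are in n-subgeneral position, i.e., for every subset B ⊆ {1,…,q} with #B = n + 1, the linear span of {L_j : j ∈ B} is the whole dual space of ℂ^{r+1}. Then there exist a function ω : {1,…,q} → ℝ with 0 < ω(j) ≤ 1 for all j, and a real number θ ≥ 1, such that: (i) ω(j)·θ ≤ 1 for all j; (ii) q − 2n + r − 1 = θ·(Σ_{j=1}^{q} ω(j) − r − 1); (iii) for every nonempty B ⊆ {1,…,q} with #B ≤ n + 1, Σ_{j∈B} ω(j) ≤ dim span{L_j : j ∈ B}; (iv) (n+1)/(r+1) ≤ θ ≤ (2n−r+1)/(r+1); (v) for all real numbers λ₁, …, λ_q with λ_j ≥ 1, and every subset Y ⊆ {1,…,q} with 0 < #Y ≤ n + 1, there exists M ⊆ Y with #M = dim span{L_j : j ∈ Y} such that {L_j : j ∈ M} is a basis of span{L_j : j ∈ Y} and Π_{j∈Y} λ_j^{ω(j)} ≤ Π_{j∈M} λ_j. -/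

import Mathlib

open Finset

namespace NochkaAux

structure RankFn (q n r : ℕ) where
  d : Finset (Fin q) → ℕ
  mono : ∀ {A B : Finset (Fin q)}, A ⊆ B → d A ≤ d B
  submod : ∀ A B : Finset (Fin q), d (A ∪ B) + d (A ∩ B) ≤ d A + d B
  single : ∀ j : Fin q, d {j} = 1
  empty : d ∅ = 0
  top : ∀ B : Finset (Fin q), B.card = n + 1 → d B = r + 1
  le_top : ∀ B : Finset (Fin q), d B ≤ r + 1

namespace RankFn

variable {q n r : ℕ} (R : RankFn q n r)

lemma insert_le (j : Fin q) (A : Finset (Fin q)) : R.d (insert j A) ≤ R.d A + 1 := by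
  have h := R.submod {j} A
  rw [← Finset.insert_eq] at h
  have h2 := R.single j
  omega

lemma union_card_le (A S : Finset (Fin q)) : R.d (A ∪ S) ≤ R.d A + S.card := by
  classical
  induction S using Finset.induction with
  | empty => simpa using le_refl (R.d A)
  | @insert j S hj ih =>
    have h1 : A ∪ insert j S = insert j (A ∪ S) := by
      ext x; simp [or_comm, or_left_comm, or_assoc]
    rw [h1]
    calc R.d (insert j (A ∪ S)) ≤ R.d (A ∪ S) + 1 := R.insert_le _ _
    _ ≤ R.d A + S.card + 1 := by omega
    _ = R.d A + (insert j S).card := by rw [Finset.card_insert_of_notMem hj]; ring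

lemma d_le_card (A : Finset (Fin q)) : R.d A ≤ A.card := by
  have := R.union_card_le ∅ A
  simpa [R.empty] using this

lemma large {B : Finset (Fin q)} (hB : n + 1 ≤ B.card) : R.d B = r + 1 := by
  obtain ⟨C, hCB, hC⟩ := Finset.exists_subset_card_eq hB
  have := R.mono hCB
  have := R.top C hC
  have := R.le_top B
  omega

lemma low (hq' : n + 1 ≤ q) (B : Finset (Fin q)) (hB : B.card ≤ n + 1) :
    B.card + r ≤ R.d B + n := by
  obtain ⟨C, hBC, hC⟩ := Finset.exists_superset_card_eq hB (by simpa using hq')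
  have h1 : R.d C = r + 1 := R.top C hC
  have h2 : C = B ∪ (C \ B) := by rw [Finset.union_sdiff_of_subset hBC]
  have h3 : R.d C ≤ R.d B + (C \ B).card := by
    calc R.d C = R.d (B ∪ (C \ B)) := by rw [← h2]
    _ ≤ R.d B + (C \ B).card := R.union_card_le _ _
  have h4 : (C \ B).card = n + 1 - B.card := by rw [Finset.card_sdiff_of_subset hBC, hC]
  omega

def clo (A : Finset (Fin q)) : Finset (Fin q) :=
  Finset.univ.filter fun j => R.d (insert j A) = R.d A

lemma subset_clo (A : Finset (Fin q)) : A ⊆ R.clo A := by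
  intro j hj
  simp [clo, Finset.insert_eq_self.2 hj]

lemma d_union_eq (A S : Finset (Fin q)) (hS : ∀ j ∈ S, R.d (insert j A) = R.d A) :
    R.d (A ∪ S) = R.d A := by
  classical
  induction S using Finset.induction with
  | empty => simp
  | @insert j S hj ih =>
    have hS' : ∀ k ∈ S, R.d (insert k A) = R.d A := fun k hk => hS k (Finset.mem_insert_of_mem hk)
    have hAS : R.d (A ∪ S) = R.d A := ih hS'
    have h1 : A ∪ insert j S = insert j (A ∪ S) := by
      ext x; simp [or_comm, or_left_comm, or_assoc]
    rw [h1]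
    have hsub := R.submod (A ∪ S) (insert j A)
    have hu : (A ∪ S) ∪ insert j A = insert j (A ∪ S) := by
      ext x; simp; tauto
    have hi : A ⊆ (A ∪ S) ∩ insert j A := by
      intro x hx; simp [hx]
    have h2 : R.d A ≤ R.d ((A ∪ S) ∩ insert j A) := R.mono hi
    have h3 : R.d (A ∪ S) ≤ R.d (insert j (A ∪ S)) := R.mono (Finset.subset_insert _ _)
    rw [hu] at hsub
    have h4 := hS j (Finset.mem_insert_self j S)
    omega

lemma d_clo (A : Finset (Fin q)) : R.d (R.clo A) = R.d A := by
  have h : R.clo A = A ∪ R.clo A := by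
    rw [Finset.union_eq_right.2 (R.subset_clo A)]
  rw [h]
  exact R.d_union_eq A (R.clo A) (fun j hj => by simpa [clo] using hj)

lemma clo_flat (A : Finset (Fin q)) {C : Finset (Fin q)} (hC : R.clo A ⊂ C) :
    R.d (R.clo A) < R.d C := by
  obtain ⟨j, hjC, hjn⟩ := Finset.exists_of_ssubset hC
  have h1 : R.d (insert j A) ≠ R.d A := by
    intro h; exact hjn (by simp [clo, h])
  have h2 : R.d A ≤ R.d (insert j A) := R.mono (Finset.subset_insert _ _)
  have h3 : insert j A ⊆ C := by
    intro x hx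
    rcases Finset.mem_insert.1 hx with h | h
    · exact h ▸ hjC
    · exact hC.subset (R.subset_clo A h)
  have h4 := R.mono h3
  rw [R.d_clo]
  omega

end RankFn

end NochkaAux
namespace NochkaAux

open Finset

variable {q n r : ℕ}

def chainOK (R : RankFn q n r) : Finset (Fin q) → List (Finset (Fin q)) → Prop
  | A, [] => ∀ C, R.d C ≤ r → A ⊂ C →
      ((C.card : ℝ) - A.card) * ((r : ℝ) + 1 - R.d A) <
        (2*(n:ℝ) - r + 1 - A.card) * ((R.d C : ℝ) - R.d A)
  | A, A₁ :: l =>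
      R.d A₁ ≤ r ∧ (∀ C, A₁ ⊂ C → R.d A₁ < R.d C) ∧ A ⊂ A₁ ∧ R.d A < R.d A₁ ∧
      ((2*(n:ℝ) - r + 1 - A.card) * ((R.d A₁ : ℝ) - R.d A) ≤
        ((A₁.card : ℝ) - A.card) * ((r:ℝ) + 1 - R.d A)) ∧
      (∀ C, R.d C ≤ r → A ⊂ C →
        ((C.card : ℝ) - A.card) * ((R.d A₁ : ℝ) - R.d A) ≤
          ((A₁.card : ℝ) - A.card) * ((R.d C : ℝ) - R.d A)) ∧
      chainOK R A₁ l

def lastF : Finset (Fin q) → List (Finset (Fin q)) → Finset (Fin q)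
  | A, [] => A
  | _, A₁ :: l => lastF A₁ l

lemma lastF_subset {R : RankFn q n r} :
    ∀ (l : List (Finset (Fin q))) (A : Finset (Fin q)), chainOK R A l → A ⊆ lastF A l := by
  intro l
  induction l with
  | nil => intro A _; exact Finset.Subset.refl A
  | cons A₁ l ih =>
    intro A h
    exact (h.2.2.1.subset).trans (ih A₁ h.2.2.2.2.2.2)

lemma lastF_d_le {R : RankFn q n r} :
    ∀ (l : List (Finset (Fin q))) (A : Finset (Fin q)), chainOK R A l → R.d A ≤ r →
      R.d (lastF A l) ≤ r := by
  intro l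
  induction l with
  | nil => intro A _ hA; exact hA
  | cons A₁ l ih => intro A h _; exact ih A₁ h.2.2.2.2.2.2 h.1

lemma lastF_stop {R : RankFn q n r} :
    ∀ (l : List (Finset (Fin q))) (A : Finset (Fin q)), chainOK R A l →
      ∀ C, R.d C ≤ r → lastF A l ⊂ C →
      ((C.card : ℝ) - (lastF A l).card) * ((r : ℝ) + 1 - R.d (lastF A l)) <
        (2*(n:ℝ) - r + 1 - (lastF A l).card) * ((R.d C : ℝ) - R.d (lastF A l)) := by
  intro l
  induction l with
  | nil => intro A h; exact h
  | cons A₁ l ih => intro A h; exact ih A₁ h.2.2.2.2.2.2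

lemma lastF_flat {R : RankFn q n r} :
    ∀ (l : List (Finset (Fin q))) (A : Finset (Fin q)), chainOK R A l →
      (∀ C, A ⊂ C → R.d A < R.d C) →
      ∀ C, lastF A l ⊂ C → R.d (lastF A l) < R.d C := by
  intro l
  induction l with
  | nil => intro A _ hA; exact hA
  | cons A₁ l ih => intro A h _; exact ih A₁ h.2.2.2.2.2.2 h.2.1

lemma chain_exists (R : RankFn q n r) (hr : 1 ≤ r) :
    ∀ (k : ℕ) (A : Finset (Fin q)), q - A.card ≤ k → R.d A ≤ r →
      (∀ C, A ⊂ C → R.d A < R.d C) → ∃ l, chainOK R A l := by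
  intro k
  induction k with
  | zero =>
    intro A hk _ _
    refine ⟨[], ?_⟩
    intro C _ hC
    exfalso
    have h1 : A.card < C.card := Finset.card_lt_card hC
    have h2 : C.card ≤ q := by
      simpa using Finset.card_le_univ C
    omega
  | succ k ih =>
    intro A hk hAr hAflat
    classical
    by_cases h : ∃ C : Finset (Fin q), (R.d C ≤ r ∧ A ⊂ C) ∧
        (2*(n:ℝ) - r + 1 - A.card) * ((R.d C : ℝ) - R.d A) ≤
          ((C.card : ℝ) - A.card) * ((r:ℝ) + 1 - R.d A)
    · obtain ⟨Cw, ⟨hCwr, hCwA⟩, hCwel⟩ := h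
      set f : Finset (Fin q) → ℝ :=
        fun C => ((C.card : ℝ) - A.card) / ((R.d C : ℝ) - R.d A) with hf
      set cand : Finset (Finset (Fin q)) :=
        Finset.univ.filter (fun C => R.d C ≤ r ∧ A ⊂ C) with hcand
      have hne : cand.Nonempty := ⟨Cw, by simp [hcand, hCwr, hCwA]⟩
      obtain ⟨C₀, hC₀mem, hC₀max⟩ := Finset.exists_max_image cand f hne
      have hC₀ : R.d C₀ ≤ r ∧ A ⊂ C₀ := by simpa [hcand] using hC₀mem
      set A₁ := R.clo C₀ with hA₁
      have hA₁d : R.d A₁ = R.d C₀ := R.d_clo C₀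
      have hC₀A₁ : C₀ ⊆ A₁ := R.subset_clo C₀
      have hAA₁ : A ⊂ A₁ := lt_of_lt_of_le hC₀.2 hC₀A₁
      have hA₁r : R.d A₁ ≤ r := by rw [hA₁d]; exact hC₀.1
      have hdlt : R.d A < R.d A₁ := by rw [hA₁d]; exact hAflat C₀ hC₀.2
      -- denominators
      have hden : ∀ C : Finset (Fin q), A ⊂ C → (0:ℝ) < (R.d C : ℝ) - R.d A := by
        intro C hC
        have := hAflat C hC
        have : (R.d A : ℝ) < R.d C := by exact_mod_cast this
        linarith
      have hdenA : (0:ℝ) < (r:ℝ) + 1 - R.d A := by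
        have : (R.d A : ℝ) ≤ r := by exact_mod_cast hAr
        linarith
      -- f A₁ ≥ f C for all candidates C
      have hfA₁ : ∀ C : Finset (Fin q), R.d C ≤ r → A ⊂ C → f C ≤ f A₁ := by
        intro C hCr hCA
        have h1 : f C ≤ f C₀ := hC₀max C (by simp [hcand, hCr, hCA])
        have h2 : f C₀ ≤ f A₁ := by
          rw [hf]
          simp only
          rw [hA₁d]
          have hcards : (C₀.card : ℝ) ≤ A₁.card := by
            exact_mod_cast Finset.card_le_card hC₀A₁
          have := hden C₀ hC₀.2
          gcongr
        exact h1.trans h2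
      -- max property in cross-multiplied form
      have hmaxcross : ∀ C, R.d C ≤ r → A ⊂ C →
          ((C.card : ℝ) - A.card) * ((R.d A₁ : ℝ) - R.d A) ≤
            ((A₁.card : ℝ) - A.card) * ((R.d C : ℝ) - R.d A) := by
        intro C hCr hCA
        have := hfA₁ C hCr hCA
        rw [hf] at this
        simp only at this
        exact (div_le_div_iff₀ (hden C hCA) (hden A₁ hAA₁)).1 this
      -- eligibility in cross-multiplied form
      have helig : (2*(n:ℝ) - r + 1 - A.card) * ((R.d A₁ : ℝ) - R.d A) ≤
          ((A₁.card : ℝ) - A.card) * ((r:ℝ) + 1 - R.d A) := by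
        have h1 : (2*(n:ℝ) - r + 1 - A.card) / ((r:ℝ) + 1 - R.d A) ≤ f Cw := by
          rw [hf]
          exact (div_le_div_iff₀ hdenA (hden Cw hCwA)).2 hCwel
        have h2 := h1.trans (hfA₁ Cw hCwr hCwA)
        rw [hf] at h2
        simp only at h2
        exact (div_le_div_iff₀ hdenA (hden A₁ hAA₁)).1 h2
      -- recurse
      have hcardlt : A.card < A₁.card := Finset.card_lt_card hAA₁
      have hA₁q : A₁.card ≤ q := by simpa using Finset.card_le_univ A₁
      obtain ⟨l, hl⟩ := ih A₁ (by omega) hA₁r (by rw [hA₁]; exact fun C hC => R.clo_flat C₀ hC)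
      exact ⟨A₁ :: l, hA₁r, (by rw [hA₁]; exact fun C hC => R.clo_flat C₀ hC), hAA₁, hdlt,
        helig, hmaxcross, hl⟩
    · refine ⟨[], ?_⟩
      intro C hCr hCA
      push_neg at h
      exact h C ⟨hCr, hCA⟩

end NochkaAux
namespace NochkaAux

open Finset

variable {q n r : ℕ}

noncomputable def theta (R : RankFn q n r) (F : Finset (Fin q)) : ℝ :=
  (2*(n:ℝ) - r + 1 - F.card) / ((r:ℝ) + 1 - R.d F)

lemma theta_facts (R : RankFn q n r) (hrn : r ≤ n) (hq' : n + 1 ≤ q)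
    {F : Finset (Fin q)} (hF : R.d F ≤ r) :
    (0:ℝ) < 2*(n:ℝ) - r + 1 - F.card ∧ (0:ℝ) < (r:ℝ) + 1 - R.d F ∧
      F.card + r ≤ R.d F + n ∧ 0 < theta R F := by
  have hcard : F.card ≤ n := by
    by_contra h
    have := R.large (B := F) (by omega)
    omega
  have hlow := R.low hq' F (by omega)
  have h1 : (F.card : ℝ) + r ≤ (R.d F : ℝ) + n := by exact_mod_cast hlow
  have h2 : (R.d F : ℝ) ≤ r := by exact_mod_cast hF
  have h3 : (r:ℝ) ≤ n := by exact_mod_cast hrn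
  have hnum : (0:ℝ) < 2*(n:ℝ) - r + 1 - F.card := by linarith
  have hden : (0:ℝ) < (r:ℝ) + 1 - R.d F := by linarith
  exact ⟨hnum, hden, hlow, div_pos hnum hden⟩

lemma weights (R : RankFn q n r) (hrn : r ≤ n) (hq' : n + 1 ≤ q) :
    ∀ (l : List (Finset (Fin q))) (A : Finset (Fin q)), chainOK R A l → R.d A ≤ r →
      (theta R (lastF A l) * ((r:ℝ) + 1 - R.d A) ≤ 2*(n:ℝ) - r + 1 - A.card) ∧
      ∃ w : Fin q → ℝ,
        (∀ j ∈ lastF A l \ A, 0 < w j ∧ theta R (lastF A l) * w j ≤ 1) ∧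
        (∀ j, j ∉ lastF A l \ A → w j = 0) ∧
        ((∑ j, w j) = (R.d (lastF A l) : ℝ) - R.d A) ∧
        (∀ B : Finset (Fin q),
          ∑ j ∈ B, w j ≤ (R.d ((B ∩ lastF A l) ∪ A) : ℝ) - R.d A) := by
  intro l
  induction l with
  | nil =>
    intro A hch hA
    have hlast : lastF A ([] : List (Finset (Fin q))) = A := rfl
    rw [hlast]
    obtain ⟨hnum, hden, _, _⟩ := theta_facts R hrn hq' hA
    constructor
    · rw [theta, div_mul_cancel₀ _ (ne_of_gt hden)]
    · refine ⟨fun _ => 0, ?_, fun _ _ => rfl, by simp, ?_⟩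
      · intro j hj; simp at hj
      · intro B
        have h1 : (B ∩ A) ∪ A = A := Finset.union_eq_right.2 Finset.inter_subset_right
        rw [h1]
        simp
  | cons A₁ l ih =>
    intro A hch hA
    obtain ⟨hA₁r, hflat₁, hAA₁, hdlt, helig, hmax, hch'⟩ := hch
    have hlast : lastF A (A₁ :: l) = lastF A₁ l := rfl
    rw [hlast]
    set F := lastF A₁ l with hF
    obtain ⟨ihθ, w', hw'pos, hw'supp, hw'sum, hw'le⟩ := ih A₁ hch' hA₁r
    have hFr : R.d F ≤ r := lastF_d_le l A₁ hch' hA₁r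
    have hA₁F : A₁ ⊆ F := lastF_subset l A₁ hch'
    obtain ⟨hθnum, hθden, _, hθpos⟩ := theta_facts R hrn hq' hFr
    set θ := theta R F with hθ
    -- real abbreviations
    have hden₁ : (0:ℝ) < (R.d A₁ : ℝ) - R.d A := by
      have : (R.d A : ℝ) < R.d A₁ := by exact_mod_cast hdlt
      linarith
    have hnum₁ : (0:ℝ) < (A₁.card : ℝ) - A.card := by
      have : (A.card : ℝ) < A₁.card := by exact_mod_cast Finset.card_lt_card hAA₁
      linarith
    have hden₂ : (0:ℝ) < (r:ℝ) + 1 - R.d A₁ := by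
      have : (R.d A₁ : ℝ) ≤ r := by exact_mod_cast hA₁r
      linarith
    -- θ * den₁ ≤ num₁
    have h1 : θ * ((R.d A₁ : ℝ) - R.d A) ≤ (A₁.card : ℝ) - A.card := by
      have h2 : θ * (((R.d A₁ : ℝ) - R.d A) * ((r:ℝ) + 1 - R.d A₁)) ≤
          (2*(n:ℝ) - r + 1 - A₁.card) * ((R.d A₁ : ℝ) - R.d A) := by
        have := mul_le_mul_of_nonneg_right ihθ (le_of_lt hden₁)
        linarith [this]
      have h3 : (2*(n:ℝ) - r + 1 - A₁.card) * ((R.d A₁ : ℝ) - R.d A) ≤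
          ((A₁.card : ℝ) - A.card) * ((r:ℝ) + 1 - R.d A₁) := by nlinarith [helig]
      have h4 := h2.trans h3
      have h5 : θ * ((R.d A₁ : ℝ) - R.d A) * ((r:ℝ) + 1 - R.d A₁) ≤
          ((A₁.card : ℝ) - A.card) * ((r:ℝ) + 1 - R.d A₁) := by linarith [h4]
      exact le_of_mul_le_mul_right h5 hden₂
    constructor
    · -- θ ≤ s(A) in cross form
      have := ihθ
      have hsum : (r:ℝ) + 1 - R.d A = ((R.d A₁ : ℝ) - R.d A) + ((r:ℝ) + 1 - R.d A₁) := by ring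
      have hsum2 : 2*(n:ℝ) - r + 1 - A.card =
          (((A₁.card : ℝ) - A.card)) + (2*(n:ℝ) - r + 1 - A₁.card) := by ring
      rw [hsum, hsum2, mul_add]
      exact add_le_add h1 ihθ
    · -- construct w
      set ρ : ℝ := ((R.d A₁ : ℝ) - R.d A) / ((A₁.card : ℝ) - A.card) with hρ
      have hρpos : 0 < ρ := div_pos hden₁ hnum₁
      have hθρ : θ * ρ ≤ 1 := by
        rw [hρ, mul_div_assoc']
        exact (div_le_one hnum₁).2 h1
      refine ⟨fun j => w' j + (if j ∈ A₁ \ A then ρ else 0), ?_, ?_, ?_, ?_⟩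
      · intro j hj
        by_cases hjA₁ : j ∈ A₁ \ A
        · have hw'0 : w' j = 0 := hw'supp j (by
            intro hmem
            exact (Finset.mem_sdiff.1 hmem).2 (Finset.mem_sdiff.1 hjA₁).1)
          simp only [hw'0, if_pos hjA₁, zero_add]
          exact ⟨hρpos, hθρ⟩
        · have hjF : j ∈ F \ A₁ := by
            rw [Finset.mem_sdiff] at hj ⊢
            rw [Finset.mem_sdiff] at hjA₁
            refine ⟨hj.1, fun hjA₁' => ?_⟩
            push_neg at hjA₁
            exact hj.2 (hjA₁ hjA₁')
          simp only [if_neg hjA₁, add_zero]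
          exact hw'pos j hjF
      · intro j hj
        have h1' : j ∉ A₁ \ A := by
          intro hmem
          exact hj (Finset.sdiff_subset_sdiff hA₁F (Finset.Subset.refl A) hmem)
        have h2' : j ∉ F \ A₁ := by
          intro hmem
          refine hj (Finset.sdiff_subset_sdiff (Finset.Subset.refl F) hAA₁.subset hmem)
        simp only [hw'supp j h2', if_neg h1', add_zero]
      · simp only [Finset.sum_add_distrib, hw'sum]
        have hite : (∑ j : Fin q, if j ∈ A₁ \ A then ρ else 0) = (A₁ \ A).card * ρ := by
          rw [Finset.sum_ite_mem, Finset.univ_inter, Finset.sum_const, nsmul_eq_mul]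
        rw [hite]
        have hcards : ((A₁ \ A).card : ℝ) = (A₁.card : ℝ) - A.card := by
          rw [Finset.card_sdiff_of_subset hAA₁.subset]
          have := Finset.card_le_card hAA₁.subset
          push_cast [Nat.cast_sub this]
          ring
        have hval : ((A₁ \ A).card : ℝ) * ρ = (R.d A₁ : ℝ) - R.d A := by
          rw [hcards, hρ]
          field_simp
        rw [hval]
        ring
      · intro B
        simp only [Finset.sum_add_distrib]
        have hite : (∑ j ∈ B, if j ∈ A₁ \ A then ρ else 0) = (B ∩ (A₁ \ A)).card * ρ := by
          rw [Finset.sum_ite_mem, Finset.sum_const, nsmul_eq_mul]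
        rw [hite]
        -- bound 1 : ρ * |B ∩ (A₁\A)| ≤ d((B∩A₁)∪A) - d A
        set C : Finset (Fin q) := (B ∩ A₁) ∪ A with hC
        have hCA : A ⊆ C := Finset.subset_union_right
        have hCA₁ : C ⊆ A₁ := by
          rw [hC]
          exact Finset.union_subset Finset.inter_subset_right hAA₁.subset
        have hCr : R.d C ≤ r := le_trans (R.mono hCA₁) hA₁r
        have hCdiff : C \ A = B ∩ (A₁ \ A) := by
          rw [hC]; ext x
          simp only [Finset.mem_sdiff, Finset.mem_union, Finset.mem_inter]
          tauto
        have hbound1 : ((B ∩ (A₁ \ A)).card : ℝ) * ρ ≤ (R.d C : ℝ) - R.d A := by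
          by_cases hCeq : C = A
          · have : B ∩ (A₁ \ A) = ∅ := by rw [← hCdiff, hCeq, Finset.sdiff_self]
            rw [this, hCeq]
            simp
          · have hCss : A ⊂ C := Finset.ssubset_iff_subset_ne.2 ⟨hCA, Ne.symm hCeq⟩
            have hcross := hmax C hCr hCss
            have hcardC : ((B ∩ (A₁ \ A)).card : ℝ) = (C.card : ℝ) - A.card := by
              rw [← hCdiff, Finset.card_sdiff_of_subset hCA]
              have := Finset.card_le_card hCA
              push_cast [Nat.cast_sub this]
              ring
            rw [hcardC, hρ]
            rw [mul_div_assoc', div_le_iff₀ hnum₁]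
            nlinarith [hcross]
        -- bound 2 and submodularity
        have hIH := hw'le B
        set X : Finset (Fin q) := (B ∩ F) ∪ A with hX
        have hXA₁ : X ∪ A₁ = (B ∩ F) ∪ A₁ := by
          rw [hX]
          ext x
          simp only [Finset.mem_union, Finset.mem_inter]
          have := hAA₁.subset
          constructor
          · rintro ((h|h)|h)
            · exact Or.inl h
            · exact Or.inr (this h)
            · exact Or.inr h
          · rintro (h|h)
            · exact Or.inl (Or.inl h)
            · exact Or.inr h
        have hCXA₁ : C ⊆ X ∩ A₁ := by
          rw [hC, hX]
          intro x hx
          rcases Finset.mem_union.1 hx with h | h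
          · have hxB := (Finset.mem_inter.1 h).1
            have hxA₁ := (Finset.mem_inter.1 h).2
            exact Finset.mem_inter.2 ⟨Finset.mem_union.2 (Or.inl
              (Finset.mem_inter.2 ⟨hxB, hA₁F hxA₁⟩)), hxA₁⟩
          · exact Finset.mem_inter.2 ⟨Finset.mem_union.2 (Or.inr h), hAA₁.subset h⟩
        have hsubmod := R.submod X A₁
        rw [hXA₁] at hsubmod
        have hmono2 : R.d C ≤ R.d (X ∩ A₁) := R.mono hCXA₁
        have hcast : ((R.d ((B ∩ F) ∪ A₁) : ℝ)) - R.d A₁ ≤ (R.d X : ℝ) - R.d C := by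
          have h6 : (R.d ((B ∩ F) ∪ A₁) : ℝ) + R.d (X ∩ A₁) ≤ (R.d X : ℝ) + R.d A₁ := by
            exact_mod_cast hsubmod
          have h7 : (R.d C : ℝ) ≤ R.d (X ∩ A₁) := by exact_mod_cast hmono2
          linarith
        calc (∑ j ∈ B, w' j) + ((B ∩ (A₁ \ A)).card : ℝ) * ρ
            ≤ ((R.d ((B ∩ F) ∪ A₁) : ℝ) - R.d A₁) + ((R.d C : ℝ) - R.d A) := by
              exact add_le_add hIH hbound1
          _ ≤ ((R.d X : ℝ) - R.d C) + ((R.d C : ℝ) - R.d A) := by linarith [hcast]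
          _ = (R.d X : ℝ) - R.d A := by ring

end NochkaAux
namespace NochkaAux

open Finset

variable {q n r : ℕ}

set_option maxHeartbeats 2000000 in
theorem combinatorial (R : RankFn q n r) (hr : 1 ≤ r) (hrn : r ≤ n)
    (hq : 2 * n - r + 1 ≤ q) :
    ∃ (ω : Fin q → ℝ) (θ : ℝ),
      (∀ j, 0 < ω j ∧ ω j ≤ 1) ∧ 1 ≤ θ ∧
      (∀ j, ω j * θ ≤ 1) ∧
      ((q : ℝ) - 2 * n + r - 1 = θ * ((∑ j, ω j) - r - 1)) ∧
      (∀ B : Finset (Fin q), B.card ≤ n + 1 → ∑ j ∈ B, ω j ≤ (R.d B : ℝ)) ∧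
      (((n : ℝ) + 1) / (r + 1) ≤ θ ∧ θ ≤ (2 * (n : ℝ) - r + 1) / (r + 1)) := by
  classical
  have hq' : n + 1 ≤ q := by omega
  have hqR : 2 * (n:ℝ) - r + 1 ≤ q := by
    have : ((2 * n - r + 1 : ℕ) : ℝ) ≤ q := by exact_mod_cast hq
    have hrn' : (r:ℝ) ≤ n := by exact_mod_cast hrn
    push_cast [Nat.cast_sub (by omega : r ≤ 2 * n)] at this
    linarith
  have hd0 : R.d ∅ ≤ r := by rw [R.empty]; omega
  have hflat0 : ∀ C : Finset (Fin q), ∅ ⊂ C → R.d ∅ < R.d C := by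
    intro C hC
    have hCne : C.Nonempty := by
      rcases C.eq_empty_or_nonempty with h | h
      · exact absurd (h ▸ hC) (lt_irrefl ∅)
      · exact h
    obtain ⟨j, hj⟩ := hCne
    have h1 : R.d {j} ≤ R.d C := R.mono (Finset.singleton_subset_iff.2 hj)
    rw [R.empty]
    rw [R.single] at h1
    omega
  obtain ⟨l, hch⟩ := chain_exists R hr q ∅ (by omega) hd0 hflat0
  set F := lastF ∅ l with hFdef
  have hFr : R.d F ≤ r := lastF_d_le l ∅ hch hd0
  have hstop := lastF_stop l ∅ hch
  have hFflat := lastF_flat l ∅ hch hflat0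
  obtain ⟨hθnum, hθden, hlowF, hθpos⟩ := theta_facts R hrn hq' hFr
  set θ := theta R F with hθdef
  have hkey : θ * ((r:ℝ) + 1 - R.d F) = 2*(n:ℝ) - r + 1 - F.card := by
    rw [hθdef, theta, div_mul_cancel₀ _ (ne_of_gt hθden)]
  obtain ⟨hθs0, w, hwpos, hwsupp, hwsum, hwle⟩ := weights R hrn hq' l ∅ hch hd0
  rw [← hFdef] at hθs0 hwpos hwsupp hwsum hwle
  simp only [Finset.sdiff_empty, Finset.union_empty, R.empty, Nat.cast_zero, sub_zero,
    Finset.card_empty] at hθs0 hwpos hwsupp hwsum hwle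
  -- θ bounds
  have hrR : (1:ℝ) ≤ r := by exact_mod_cast hr
  have hrnR : (r:ℝ) ≤ n := by exact_mod_cast hrn
  have hFlowR : (F.card : ℝ) + r ≤ (R.d F : ℝ) + n := by exact_mod_cast hlowF
  have hdFR : (R.d F : ℝ) ≤ r := by exact_mod_cast hFr
  have hθlow : ((n:ℝ) + 1) / (r + 1) ≤ θ := by
    rw [hθdef, theta, div_le_div_iff₀ (by linarith) hθden]
    nlinarith [hFlowR, hdFR, hrnR]
  have hθ1 : (1:ℝ) ≤ θ := by
    refine le_trans ?_ hθlow
    rw [le_div_iff₀ (by linarith : (0:ℝ) < (r:ℝ)+1)]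
    linarith
  have hθhigh : θ ≤ (2 * (n : ℝ) - r + 1) / (r + 1) := by
    rw [le_div_iff₀ (by linarith : (0:ℝ) < (r:ℝ)+1)]
    linarith [hθs0]
  -- the weight function
  set ω : Fin q → ℝ := F.piecewise w (fun _ => 1/θ) with hω
  have hωF : ∀ j ∈ F, ω j = w j := fun j hj => Finset.piecewise_eq_of_mem _ _ _ hj
  have hωnF : ∀ j ∉ F, ω j = 1/θ := fun j hj => Finset.piecewise_eq_of_notMem _ _ _ hj
  have hωposle : ∀ j, (0 < ω j ∧ ω j ≤ 1) ∧ ω j * θ ≤ 1 := by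
    intro j
    by_cases hj : j ∈ F
    · obtain ⟨h1, h2⟩ := hwpos j hj
      rw [hωF j hj]
      refine ⟨⟨h1, ?_⟩, by linarith [h2]⟩
      nlinarith [h1, h2, hθ1]
    · rw [hωnF j hj]
      refine ⟨⟨by positivity, ?_⟩, ?_⟩
      · rw [div_le_one hθpos] at *; linarith
      · rw [one_div, inv_mul_cancel₀ (ne_of_gt hθpos)]
  -- sum identity
  have hsumF : ∑ j ∈ F, w j = (R.d F : ℝ) := by
    rw [← hwsum]
    exact Finset.sum_subset (Finset.subset_univ F) (fun j _ hj => hwsupp j hj)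
  have hSig : ∑ j, ω j = (R.d F : ℝ) + ((q:ℝ) - F.card) * (1/θ) := by
    rw [hω, Finset.sum_piecewise, Finset.univ_inter, hsumF, Finset.sum_const, nsmul_eq_mul]
    congr 2
    rw [Finset.sdiff_eq_inter_compl, Finset.univ_inter, Finset.card_compl]
    have : F.card ≤ Fintype.card (Fin q) := Finset.card_le_univ F
    push_cast [Nat.cast_sub this]
    simp
  have hident : (q : ℝ) - 2 * n + r - 1 = θ * ((∑ j, ω j) - r - 1) := by
    rw [hSig]
    have hexp : θ * (((R.d F : ℝ) + ((q:ℝ) - F.card) * (1/θ)) - r - 1) =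
        θ * (R.d F : ℝ) + ((q:ℝ) - F.card) - θ * ((r:ℝ) + 1) := by
      field_simp
      ring
    rw [hexp]
    have : θ * ((r:ℝ) + 1) = θ * (R.d F : ℝ) + (2*(n:ℝ) - r + 1 - F.card) := by
      linear_combination hkey
    linarith [this]
  -- the main constraint
  have hconstraint : ∀ B : Finset (Fin q), B.card ≤ n + 1 → ∑ j ∈ B, ω j ≤ (R.d B : ℝ) := by
    intro B hB
    have hsplit : ∑ j ∈ B, ω j = (∑ j ∈ B ∩ F, w j) + ((B \ F).card : ℝ) * (1/θ) := by
      rw [hω, Finset.sum_piecewise, Finset.sum_const, nsmul_eq_mul]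
    have hsum1 : ∑ j ∈ B ∩ F, w j = ∑ j ∈ B, w j := by
      refine Finset.sum_subset Finset.inter_subset_left (fun j hj hj2 => ?_)
      refine hwsupp j (fun hjF => hj2 (Finset.mem_inter.2 ⟨hj, hjF⟩))
    have hle1 : ∑ j ∈ B, w j ≤ (R.d (B ∩ F) : ℝ) := by simpa using hwle B
    -- tail bound : |B \ F| ≤ θ * (d B - d (B ∩ F))
    have hmono1 : (R.d (B ∩ F) : ℝ) ≤ (R.d B : ℝ) := by
      exact_mod_cast R.mono Finset.inter_subset_left
    have hcardx : ((B \ F).card : ℝ) + (B ∩ F).card = B.card := by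
      exact_mod_cast Finset.card_sdiff_add_card_inter B F
    have htail : ((B \ F).card : ℝ) ≤ θ * ((R.d B : ℝ) - R.d (B ∩ F)) := by
      have hsubmod := R.submod F B
      have hsubmodR : (R.d (F ∪ B) : ℝ) + R.d (B ∩ F) ≤ (R.d F : ℝ) + R.d B := by
        rw [Finset.inter_comm B F]
        exact_mod_cast hsubmod
      by_cases hFB : R.d (F ∪ B) ≤ r
      · -- stop condition case
        by_cases hBF : B ⊆ F
        · have : B \ F = ∅ := Finset.sdiff_eq_empty_iff_subset.2 hBF
          rw [this]
          simp only [Finset.card_empty, Nat.cast_zero]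
          have := mul_nonneg (le_of_lt hθpos) (by linarith [hmono1] : (0:ℝ) ≤ (R.d B : ℝ) - R.d (B ∩ F))
          linarith
        · have hss : F ⊂ F ∪ B := by
            refine Finset.ssubset_iff_subset_ne.2 ⟨Finset.subset_union_left, fun h => ?_⟩
            exact hBF (fun x hx => by
              have : x ∈ F ∪ B := Finset.mem_union.2 (Or.inr hx)
              rwa [← h] at this)
          have hstopC := hstop (F ∪ B) hFB hss
          have hcardC : ((F ∪ B).card : ℝ) - F.card = ((B \ F).card : ℝ) := by
            have h1 : (B \ F).card + F.card = (B ∪ F).card := Finset.card_sdiff_add_card B F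
            rw [Finset.union_comm B F] at h1
            have : ((B \ F).card : ℝ) + F.card = ((F ∪ B).card : ℝ) := by exact_mod_cast h1
            linarith
          rw [hcardC] at hstopC
          have h2 : ((B \ F).card : ℝ) * ((r:ℝ) + 1 - R.d F) ≤
              θ * ((r:ℝ) + 1 - R.d F) * ((R.d (F ∪ B) : ℝ) - R.d F) := by
            rw [hkey]
            linarith [hstopC]
          have h3 : ((B \ F).card : ℝ) ≤ θ * ((R.d (F ∪ B) : ℝ) - R.d F) := by
            have e6 : (θ * ((R.d (F ∪ B) : ℝ) - R.d F)) * ((r:ℝ) + 1 - R.d F) =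
                θ * ((r:ℝ) + 1 - R.d F) * ((R.d (F ∪ B) : ℝ) - R.d F) := by ring
            exact le_of_mul_le_mul_right (by linarith [h2, e6]) hθden
          have m4 : θ * ((R.d (F ∪ B) : ℝ) - R.d F) ≤ θ * ((R.d B : ℝ) - R.d (B ∩ F)) :=
            mul_le_mul_of_nonneg_left (by linarith [hsubmodR]) (le_of_lt hθpos)
          linarith [h3, m4]
      · -- full rank case
        have hFB1 : R.d (F ∪ B) = r + 1 := by
          have := R.le_top (F ∪ B); omega
        have ht1 : (r:ℝ) + 1 - R.d F ≤ (R.d B : ℝ) - R.d (B ∩ F) := by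
          rw [hFB1] at hsubmodR
          push_cast at hsubmodR
          linarith
        have hlowB := R.low hq' B hB
        have hlowBR : (B.card : ℝ) + r ≤ (R.d B : ℝ) + n := by exact_mod_cast hlowB
        have hdBFle : (R.d (B ∩ F) : ℝ) ≤ ((B ∩ F).card : ℝ) := by
          exact_mod_cast R.d_le_card (B ∩ F)
        have ht2 : ((B \ F).card : ℝ) - ((n:ℝ) - r) ≤ (R.d B : ℝ) - R.d (B ∩ F) := by
          linarith
        by_cases hcase : ((r:ℝ) + 1 - R.d F) + ((n:ℝ) - r) ≤ ((B \ F).card : ℝ)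
        · have hA1 : (n:ℝ) - r ≤ ((r:ℝ) + 1 - R.d F) * (θ - 1) := by
            have e1 : ((r:ℝ) + 1 - R.d F) * (θ - 1) =
                (2*(n:ℝ) - r + 1 - F.card) - ((r:ℝ) + 1 - R.d F) := by
              linear_combination hkey
            rw [e1]
            linarith [hFlowR]
          have hA2 : θ * ((n:ℝ) - r) ≤ (θ - 1) * ((B \ F).card : ℝ) := by
            have m1 := mul_le_mul_of_nonneg_left hcase (by linarith : (0:ℝ) ≤ θ - 1)
            have e2 : (θ - 1) * (((r:ℝ) + 1 - R.d F) + ((n:ℝ) - r)) =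
                ((r:ℝ) + 1 - R.d F) * (θ - 1) + ((n:ℝ) - r) * (θ - 1) := by ring
            have e3 : ((n:ℝ) - r) + ((n:ℝ) - r) * (θ - 1) = θ * ((n:ℝ) - r) := by ring
            linarith [m1, hA1, e2, e3]
          have m2 := mul_le_mul_of_nonneg_left ht2 (le_of_lt hθpos)
          have e4 : θ * (((B \ F).card : ℝ) - ((n:ℝ) - r)) =
              θ * ((B \ F).card : ℝ) - θ * ((n:ℝ) - r) := by ring
          have e5 : (θ - 1) * ((B \ F).card : ℝ) =
              θ * ((B \ F).card : ℝ) - ((B \ F).card : ℝ) := by ring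
          linarith [hA2, m2, e4, e5]
        · push_neg at hcase
          have hB1 : ((B \ F).card : ℝ) < (n:ℝ) + 1 - R.d F := by linarith
          have hB2 : (n:ℝ) + 1 - R.d F ≤ θ * ((r:ℝ) + 1 - R.d F) := by
            rw [hkey]; linarith
          have m3 := mul_le_mul_of_nonneg_left ht1 (le_of_lt hθpos)
          linarith [hB1, hB2, m3]
    calc ∑ j ∈ B, ω j = (∑ j ∈ B, w j) + ((B \ F).card : ℝ) * (1/θ) := by
          rw [hsplit, hsum1]
      _ ≤ (R.d (B ∩ F) : ℝ) + ((R.d B : ℝ) - R.d (B ∩ F)) := by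
          refine add_le_add hle1 ?_
          rw [mul_one_div, div_le_iff₀ hθpos]
          linarith [htail]
      _ = (R.d B : ℝ) := by ring
  exact ⟨ω, θ, fun j => (hωposle j).1, hθ1, fun j => (hωposle j).2, hident, hconstraint,
    hθlow, hθhigh⟩

end NochkaAux
namespace NochkaAux

open Finset Submodule Module

variable {q r : ℕ} (L : Fin q → Module.Dual ℂ (Fin (r + 1) → ℂ))

lemma span_image_union (A B : Finset (Fin q)) :
    span ℂ (L '' ((A ∪ B : Finset (Fin q)) : Set (Fin q))) =
      span ℂ (L '' (A : Set (Fin q))) ⊔ span ℂ (L '' (B : Set (Fin q))) := by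
  rw [Finset.coe_union, Set.image_union, Submodule.span_union]

lemma indep_of_card (M : Finset (Fin q))
    (h : M.card = finrank ℂ (span ℂ (L '' (M : Set (Fin q))))) :
    LinearIndependent ℂ (fun j : (M : Set (Fin q)) => L j) := by
  rw [linearIndependent_iff_card_eq_finrank_span]
  rw [← Set.image_eq_range]
  have h1 : Fintype.card ((M : Set (Fin q))) = M.card := by
    simp
  rw [h1]
  simp only [Set.finrank]
  exact h

lemma greedy (ω : Fin q → ℝ) :
    ∀ (m : ℕ) (Y : Finset (Fin q)), Y.card ≤ m →
      ∀ c : Fin q → ℝ, (∀ j ∈ Y, 0 ≤ c j) →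
      (∀ B : Finset (Fin q), B ⊆ Y →
        ∑ j ∈ B, ω j ≤ (finrank ℂ (span ℂ (L '' (B : Set (Fin q)))) : ℝ)) →
      ∃ M : Finset (Fin q), M ⊆ Y ∧
        M.card = finrank ℂ (span ℂ (L '' (Y : Set (Fin q)))) ∧
        span ℂ (L '' (M : Set (Fin q))) = span ℂ (L '' (Y : Set (Fin q))) ∧
        ∑ j ∈ Y, ω j * c j ≤ ∑ j ∈ M, c j := by
  intro m
  induction m with
  | zero =>
    intro Y hY c _ _
    have hYe : Y = ∅ := Finset.card_eq_zero.1 (Nat.le_zero.1 hY)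
    subst hYe
    refine ⟨∅, Finset.Subset.refl _, ?_, rfl, by simp⟩
    rw [Finset.coe_empty, Set.image_empty, Submodule.span_empty]; simp [finrank_bot]
  | succ m ih =>
    intro Y hY c hc hcon
    rcases Y.eq_empty_or_nonempty with hYe | hYne
    · subst hYe
      refine ⟨∅, Finset.Subset.refl _, ?_, rfl, by simp⟩
      rw [Finset.coe_empty, Set.image_empty, Submodule.span_empty]; simp [finrank_bot]
    obtain ⟨j₀, hj₀, hmin⟩ := Finset.exists_min_image Y c hYne
    set Y' := Y.erase j₀ with hY'def
    have hY'sub : Y' ⊆ Y := Finset.erase_subset _ _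
    have hY'card : Y'.card ≤ m := by
      rw [hY'def, Finset.card_erase_of_mem hj₀]; omega
    set c' : Fin q → ℝ := fun j => c j - c j₀ with hc'def
    have hc' : ∀ j ∈ Y', 0 ≤ c' j := by
      intro j hj
      have := hmin j (hY'sub hj)
      simp [hc'def]; linarith
    obtain ⟨M', hM'Y', hM'card, hM'span, hM'sum⟩ :=
      ih Y' hY'card c' hc' (fun B hB => hcon B (hB.trans hY'sub))
    set dY := finrank ℂ (span ℂ (L '' (Y : Set (Fin q)))) with hdY
    set dY' := finrank ℂ (span ℂ (L '' (Y' : Set (Fin q)))) with hdY'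
    have hspanmono : span ℂ (L '' (Y' : Set (Fin q))) ≤ span ℂ (L '' (Y : Set (Fin q))) :=
      Submodule.span_mono (Set.image_mono (by exact_mod_cast hY'sub))
    have hdle : dY' ≤ dY := Submodule.finrank_mono hspanmono
    have hinsert : Y = insert j₀ Y' := (Finset.insert_erase hj₀).symm
    have hspanY : span ℂ (L '' (Y : Set (Fin q))) =
        span ℂ {L j₀} ⊔ span ℂ (L '' (Y' : Set (Fin q))) := by
      rw [hinsert, Finset.coe_insert, Set.image_insert_eq, Submodule.span_insert]
    have hdle2 : dY ≤ dY' + 1 := by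
      rw [hdY, hspanY]
      have h1 := Submodule.finrank_sup_add_finrank_inf_eq
        (span ℂ {L j₀}) (span ℂ (L '' (Y' : Set (Fin q))))
      have h2 : finrank ℂ (span ℂ ({L j₀} : Set (Module.Dual ℂ (Fin (r+1) → ℂ)))) ≤ 1 :=
        finrank_span_le_card _ |>.trans (by simp)
      omega
    -- key inequality
    have hcY := hcon Y (Finset.Subset.refl Y)
    have hc₀ : 0 ≤ c j₀ := hc j₀ hj₀
    have hstep1 : ∑ j ∈ Y, ω j * c j = (∑ j ∈ Y, ω j * c' j) + c j₀ * ∑ j ∈ Y, ω j := by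
      rw [Finset.mul_sum, ← Finset.sum_add_distrib]
      congr 1; ext j
      simp [hc'def]; ring
    have hstep2 : ∑ j ∈ Y, ω j * c' j = ∑ j ∈ Y', ω j * c' j := by
      rw [hinsert, Finset.sum_insert (Finset.notMem_erase j₀ Y)]
      simp [hc'def, hY'def]
    have hstep3 : c j₀ * ∑ j ∈ Y, ω j ≤ c j₀ * dY :=
      mul_le_mul_of_nonneg_left hcY hc₀
    have hstep4 : ∑ j ∈ M', c' j = (∑ j ∈ M', c j) - c j₀ * dY' := by
      rw [← hM'card]
      simp [hc'def, Finset.sum_sub_distrib]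
      ring
    by_cases heq : dY' = dY
    · refine ⟨M', hM'Y'.trans hY'sub, by rw [hM'card, ← heq], ?_, ?_⟩
      · rw [hM'span]
        exact Submodule.eq_of_le_of_finrank_eq hspanmono (by rw [← hdY', ← hdY, heq])
      · have := hM'sum
        rw [hstep4] at this
        rw [hstep1, hstep2]
        have hrw : (dY' : ℝ) = dY := by exact_mod_cast heq
        rw [hrw] at this
        linarith [hstep3, this]
    · have hdY1 : dY = dY' + 1 := by omega
      have hj₀M' : j₀ ∉ M' := fun h => Finset.notMem_erase j₀ Y (hM'Y' h)
      refine ⟨insert j₀ M', ?_, ?_, ?_, ?_⟩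
      · rw [hinsert]
        exact Finset.insert_subset_insert j₀ hM'Y'
      · rw [Finset.card_insert_of_notMem hj₀M', hM'card, hdY1]
      · rw [Finset.coe_insert, Set.image_insert_eq, Submodule.span_insert, hM'span, ← hspanY]
      · rw [Finset.sum_insert hj₀M', hstep1, hstep2]
        have := hM'sum
        rw [hstep4] at this
        have hcast : (dY : ℝ) = (dY' : ℝ) + 1 := by exact_mod_cast hdY1
        have h5 : c j₀ * (dY : ℝ) = c j₀ * dY' + c j₀ := by rw [hcast]; ring
        linarith [hstep3, this]

end NochkaAux
namespace NochkaAux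

open Finset Submodule Module

variable {q n r : ℕ}

lemma dual_dim (r : ℕ) : finrank ℂ (Module.Dual ℂ (Fin (r + 1) → ℂ)) = r + 1 := by
  rw [Subspace.dual_finrank_eq, Module.finrank_pi]
  simp

lemma rank_mono (L : Fin q → Module.Dual ℂ (Fin (r + 1) → ℂ)) {A B : Finset (Fin q)}
    (h : A ⊆ B) : finrank ℂ (span ℂ (L '' (A : Set (Fin q)))) ≤
      finrank ℂ (span ℂ (L '' (B : Set (Fin q)))) :=
  Submodule.finrank_mono (span_mono (Set.image_mono (Finset.coe_subset.2 h)))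

lemma rank_submod (L : Fin q → Module.Dual ℂ (Fin (r + 1) → ℂ)) (A B : Finset (Fin q)) :
    finrank ℂ (span ℂ (L '' ((A ∪ B : Finset (Fin q)) : Set (Fin q)))) +
      finrank ℂ (span ℂ (L '' ((A ∩ B : Finset (Fin q)) : Set (Fin q)))) ≤
    finrank ℂ (span ℂ (L '' (A : Set (Fin q)))) +
      finrank ℂ (span ℂ (L '' (B : Set (Fin q)))) := by
  have h1 := span_image_union L A B
  have h2 : span ℂ (L '' ((A ∩ B : Finset (Fin q)) : Set (Fin q))) ≤
      (span ℂ (L '' (A : Set (Fin q)))) ⊓ (span ℂ (L '' (B : Set (Fin q)))) := by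
    apply le_inf
    · exact span_mono (Set.image_mono (Finset.coe_subset.2 Finset.inter_subset_left))
    · exact span_mono (Set.image_mono (Finset.coe_subset.2 Finset.inter_subset_right))
  have h3 := Submodule.finrank_sup_add_finrank_inf_eq
    (span ℂ (L '' (A : Set (Fin q)))) (span ℂ (L '' (B : Set (Fin q))))
  have h4 := Submodule.finrank_mono h2
  rw [h1]
  omega

lemma rank_single (L : Fin q → Module.Dual ℂ (Fin (r + 1) → ℂ)) (hL0 : ∀ j, L j ≠ 0)
    (j : Fin q) : finrank ℂ (span ℂ (L '' (({j} : Finset (Fin q)) : Set (Fin q)))) = 1 := by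
  have h : (L '' (({j} : Finset (Fin q)) : Set (Fin q))) = {L j} := by simp
  rw [h]
  exact finrank_span_singleton (hL0 j)

lemma rank_empty (L : Fin q → Module.Dual ℂ (Fin (r + 1) → ℂ)) :
    finrank ℂ (span ℂ (L '' ((∅ : Finset (Fin q)) : Set (Fin q)))) = 0 := by
  have h : (L '' ((∅ : Finset (Fin q)) : Set (Fin q))) = ∅ := by simp
  rw [h, Submodule.span_empty]
  exact finrank_bot ℂ _

lemma rank_top (L : Fin q → Module.Dual ℂ (Fin (r + 1) → ℂ)) (B : Finset (Fin q))
    (h : Submodule.span ℂ (L '' (B : Set (Fin q))) = ⊤) :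
    finrank ℂ (span ℂ (L '' (B : Set (Fin q)))) = r + 1 := by
  rw [h, finrank_top, dual_dim]

lemma rank_le_top (L : Fin q → Module.Dual ℂ (Fin (r + 1) → ℂ)) (B : Finset (Fin q)) :
    finrank ℂ (span ℂ (L '' (B : Set (Fin q)))) ≤ r + 1 := by
  have h := Submodule.finrank_le (span ℂ (L '' (B : Set (Fin q))))
  rw [dual_dim] at h
  exact h

noncomputable def mkRank (n : ℕ) (L : Fin q → Module.Dual ℂ (Fin (r + 1) → ℂ))
    (hL0 : ∀ j, L j ≠ 0)
    (hpos : ∀ B : Finset (Fin q), B.card = n + 1 →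
      Submodule.span ℂ (L '' (B : Set (Fin q))) = ⊤) : RankFn q n r where
  d := fun B => finrank ℂ (span ℂ (L '' (B : Set (Fin q))))
  mono := fun h => rank_mono L h
  submod := fun A B => rank_submod L A B
  single := fun j => rank_single L hL0 j
  empty := rank_empty L
  top := fun B hB => rank_top L B (hpos B hB)
  le_top := fun B => rank_le_top L B

end NochkaAux

open Finset Submodule Module NochkaAux

set_option maxHeartbeats 1000000 in
theorem stmt_5 (r n q : ℕ) (hr : 1 ≤ r) (hrn : r ≤ n) (hq : 2 * n - r + 1 ≤ q)
    (L : Fin q → Module.Dual ℂ (Fin (r + 1) → ℂ))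
    (hL0 : ∀ j, L j ≠ 0)
    (hpos : ∀ B : Finset (Fin q), B.card = n + 1 →
      Submodule.span ℂ (L '' (B : Set (Fin q))) = ⊤) :
    ∃ (ω : Fin q → ℝ) (θ : ℝ),
      (∀ j, 0 < ω j ∧ ω j ≤ 1) ∧ 1 ≤ θ ∧
      (∀ j, ω j * θ ≤ 1) ∧
      ((q : ℝ) - 2 * n + r - 1 = θ * ((∑ j, ω j) - r - 1)) ∧
      (∀ B : Finset (Fin q), B.Nonempty → B.card ≤ n + 1 →
        ∑ j ∈ B, ω j ≤
          (Module.finrank ℂ (Submodule.span ℂ (L '' (B : Set (Fin q)))) : ℝ)) ∧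
      (((n : ℝ) + 1) / (r + 1) ≤ θ ∧ θ ≤ (2 * (n : ℝ) - r + 1) / (r + 1)) ∧
      (∀ lam : Fin q → ℝ, (∀ j, 1 ≤ lam j) →
        ∀ Y : Finset (Fin q), 0 < Y.card → Y.card ≤ n + 1 →
          ∃ M : Finset (Fin q), M ⊆ Y ∧
            M.card = Module.finrank ℂ (Submodule.span ℂ (L '' (Y : Set (Fin q)))) ∧
            LinearIndependent ℂ (fun j : (M : Set (Fin q)) => L j) ∧
            Submodule.span ℂ (L '' (M : Set (Fin q))) =
              Submodule.span ℂ (L '' (Y : Set (Fin q))) ∧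
            ∏ j ∈ Y, lam j ^ ω j ≤ ∏ j ∈ M, lam j) := by
  classical
  let R : RankFn q n r := mkRank n L hL0 hpos
  obtain ⟨ω, θ, h1, h2, h3, h4, h5, h6⟩ := combinatorial R hr hrn hq
  have h5' : ∀ B : Finset (Fin q), B.card ≤ n + 1 →
      ∑ j ∈ B, ω j ≤ (finrank ℂ (span ℂ (L '' (B : Set (Fin q)))) : ℝ) := h5
  refine ⟨ω, θ, h1, h2, h3, h4, fun B _ hB => h5' B hB, h6, ?_⟩
  intro lam hlam Y _ hY1
  obtain ⟨M, hMY, hMcard, hMspan, hMsum⟩ := greedy L ω Y.card Y le_rfl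
    (fun j => Real.log (lam j)) (fun j _ => Real.log_nonneg (hlam j))
    (fun B hBY => h5' B (le_trans (Finset.card_le_card hBY) hY1))
  have hlpos : ∀ j, (0:ℝ) < lam j := fun j => lt_of_lt_of_le one_pos (hlam j)
  refine ⟨M, hMY, hMcard, indep_of_card L M (by rw [hMcard, hMspan]), hMspan, ?_⟩
  calc ∏ j ∈ Y, lam j ^ ω j = ∏ j ∈ Y, Real.exp (Real.log (lam j) * ω j) := by
        refine Finset.prod_congr rfl (fun j _ => ?_)
        rw [Real.rpow_def_of_pos (hlpos j)]
    _ = Real.exp (∑ j ∈ Y, Real.log (lam j) * ω j) := (Real.exp_sum _ _).symm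
    _ ≤ Real.exp (∑ j ∈ M, Real.log (lam j)) := by
        apply Real.exp_le_exp.2
        have hcomm : ∑ j ∈ Y, Real.log (lam j) * ω j = ∑ j ∈ Y, ω j * Real.log (lam j) :=
          Finset.sum_congr rfl (fun j _ => mul_comm _ _)
        rw [hcomm]
        exact hMsum
    _ = ∏ j ∈ M, lam j := by
        rw [Real.exp_sum]
        exact Finset.prod_congr rfl (fun j _ => Real.exp_log (hlpos j))
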